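/- For 2×2 hermitian quaternionic matrices A, B, the symmetric bilinear form g(A,B) = (1/2) Re tr(A·B̃) satisfies g(A,A) = -det₀(A), recovering the Minkowski metric of signature (5,1) on the 6-dimensional real space of such matrices. -/
import Mathlib


/-- The 2×2 hermitian quaternionic matrix `(t+x, y; y*, t-x)`. -/
noncomputable def qherm (t x : ℝ) (y : Quaternion ℝ) : Matrix (Fin 2) (Fin 2) (Quaternion ℝ) :=
  !![((t + x : ℝ) : Quaternion ℝ), y; star y, ((t - x : ℝ) : Quaternion ℝ)]

/-- Trace reversal `Ã = A - (tr A)·1`. -/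
noncomputable def qtilde (M : Matrix (Fin 2) (Fin 2) (Quaternion ℝ)) :
    Matrix (Fin 2) (Fin 2) (Quaternion ℝ) :=
  M - (Matrix.trace M) • (1 : Matrix (Fin 2) (Fin 2) (Quaternion ℝ))

/-- The Minkowski metric `g(A,B) = (1/2) Re tr(A B̃)` on `h₂(ℍ)`. -/
noncomputable def gMink (A B : Matrix (Fin 2) (Fin 2) (Quaternion ℝ)) : ℝ :=
  (1 / 2) * ((A * qtilde B).trace).re

/-- The bilinear form `g(A,B) = (1/2) Re tr(A B̃)` on 2×2 hermitian quaternionic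
matrices is symmetric and satisfies `g(A,A) = -det₀(A) = -(t² - x² - |y|²)`, the
Minkowski metric of signature (5,1). -/
theorem gMink_symm_and_eq_neg_det :
    (∀ A B : Matrix (Fin 2) (Fin 2) (Quaternion ℝ),
      A.IsHermitian → B.IsHermitian → gMink A B = gMink B A) ∧
    (∀ (t x : ℝ) (y : Quaternion ℝ),
      gMink (qherm t x y) (qherm t x y) = -(t ^ 2 - x ^ 2 - (y * star y).re)) := by
  constructor
  · intro A B _ _
    simp only [gMink, qtilde, Matrix.trace, Matrix.diag, Matrix.mul_apply,
      Matrix.sub_apply, Matrix.smul_apply, Matrix.one_apply, Fin.sum_univ_two]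
    simp [Quaternion.re_mul]
    ring
  · intro t x y
    simp only [gMink, qtilde, qherm, Matrix.trace, Matrix.diag, Matrix.mul_apply,
      Matrix.sub_apply, Matrix.smul_apply, Matrix.one_apply, Fin.sum_univ_two,
      Matrix.cons_val', Matrix.cons_val_zero, Matrix.cons_val_one, Matrix.head_cons,
      Matrix.empty_val', Matrix.cons_val_fin_one, Matrix.head_fin_const]
    simp [Quaternion.re_mul, Quaternion.re_coe, Quaternion.imI_coe, Quaternion.imJ_coe,
      Quaternion.imK_coe]
    ring
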